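/- Let τ > 0, η > 0, β ≥ 0, let w_1,…,w_N > 0, and let R_1,…,R_N : ℝ → ℝ and G : ℝ → ℝ be differentiable functions such that η + G(t) ≠ 0 and τ·R_i′(t) = −R_i(t) + β·R_i(t)/(η + G(t)) for all i and all t (the input-free RDN excitatory dynamics). Define S(t) = ∑_{j=1}^N w_j R_j(t) and, on the set where S(t) ≠ 0, define ρ_i(t) = w_i·R_i(t)/S(t). Then ρ_i′(t) = 0 for every i and every t with S(t) ≠ 0; that is, the normalized proportions ρ_i are constant along any input-free trajectory. -/

import Mathlib

/-- Along any trajectory of the input-free RDN excitatory dynamics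
`τ R_i' = -R_i + β R_i/(η + G)`, the normalized proportions
`ρ_i = w_i R_i / S` (with `S = ∑_j w_j R_j`) are constant: `ρ_i' = 0`
wherever `S ≠ 0`. -/
theorem rdn_proportions_constant (N : ℕ) (τ β η : ℝ) (w : Fin N → ℝ)
    (hτ : 0 < τ) (hη : 0 < η) (hβ : 0 ≤ β) (hw : ∀ j, 0 < w j)
    (R : Fin N → ℝ → ℝ) (G : ℝ → ℝ)
    (hRdiff : ∀ i, Differentiable ℝ (R i)) (hGdiff : Differentiable ℝ G)
    (hG : ∀ t, η + G t ≠ 0)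
    (hode : ∀ i, ∀ t : ℝ,
      τ * deriv (R i) t = -R i t + β * R i t / (η + G t)) :
    ∀ i, ∀ t : ℝ, (∑ j, w j * R j t) ≠ 0 →
      deriv (fun s => w i * R i s / ∑ j, w j * R j s) t = 0 := by
  intro i t hS
  set k : ℝ := (β / (η + G t) - 1) / τ with hkdef
  have hderiv : ∀ j, deriv (R j) t = R j t * k := by
    intro j
    have h := hode j t
    have hτ' : τ ≠ 0 := ne_of_gt hτ
    have hGt := hG t
    field_simp [hkdef] at h ⊢
    rw [hkdef]; field_simp; linear_combination h
  have hfd : DifferentiableAt ℝ (fun s => w i * R i s) t :=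
    ((hRdiff i) t).const_mul _
  have hgd : DifferentiableAt ℝ (fun s => ∑ j, w j * R j s) t := by
    apply DifferentiableAt.fun_sum
    intro j _
    exact ((hRdiff j) t).const_mul _
  have hf' : deriv (fun s => w i * R i s) t = w i * R i t * k := by
    rw [deriv_const_mul _ ((hRdiff i) t), hderiv i]; ring
  have hg' : deriv (fun s => ∑ j, w j * R j s) t = (∑ j, w j * R j t) * k := by
    rw [deriv_fun_sum (fun j _ => ((hRdiff j) t).const_mul _)]
    rw [Finset.sum_mul]
    apply Finset.sum_congr rfl
    intro j _
    rw [deriv_const_mul _ ((hRdiff j) t), hderiv j]; ring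
  rw [deriv_fun_div hfd hgd hS, hf', hg']
  field_simp
  ring
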